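/- Consider the scalar ODE ẋ = −ρx − κ₁|x|^{γ₁} sgn(x) − κ₂|x|^{γ₂} sgn(x) with ρ, κ₁, κ₂ > 0, 0 < γ₁ < 1 < γ₂, and initial value x(0) = x₀. Then for every x₀, the solution reaches 0 in finite time T(x₀), and T(x₀) ≤ (1/(ρ(γ₂−1))) ln(1 + ρ/κ₂) + (1/(ρ(1−γ₁))) ln(1 + ρ/κ₁); in particular the settling time is bounded uniformly in x₀ (fixed-time stability). -/

import Mathlib

/-- Signed power `|y|^γ sgn(y)` appearing in the attracting laws. -/
noncomputable def spow (y γ : ℝ) : ℝ := |y| ^ γ * Real.sign y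

lemma spow_of_pos {y : ℝ} (hy : 0 < y) (γ : ℝ) : spow y γ = y ^ γ := by
  unfold spow
  rw [Real.sign_of_pos hy, abs_of_pos hy, mul_one]

lemma spow_neg (y γ : ℝ) : spow (-y) γ = -spow y γ := by
  unfold spow
  rw [abs_neg, Real.sign_neg, mul_neg]

set_option maxHeartbeats 1000000 in
/-- Core contradiction lemma: a positive solution cannot stay positive past `T₂ + T₁`. -/
lemma no_escape (ρ κ₁ κ₂ γ₁ γ₂ : ℝ)
    (hρ : 0 < ρ) (hκ₁ : 0 < κ₁) (hκ₂ : 0 < κ₂)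
    (hγ₁0 : 0 < γ₁) (hγ₁1 : γ₁ < 1) (hγ₂ : 1 < γ₂)
    (x : ℝ → ℝ) (T₂ T₁ : ℝ)
    (hT₂ : T₂ = 1 / (ρ * (γ₂ - 1)) * Real.log (1 + ρ / κ₂))
    (hT₁ : T₁ = 1 / (ρ * (1 - γ₁)) * Real.log (1 + ρ / κ₁))
    (hode : ∀ t ∈ Set.Icc 0 (T₂ + T₁),
      HasDerivAt x (-(ρ * x t + κ₁ * x t ^ γ₁ + κ₂ * x t ^ γ₂)) t)
    (hpos : ∀ t ∈ Set.Icc 0 (T₂ + T₁), 0 < x t) : False := by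
  set a : ℝ := ρ * (γ₂ - 1) with ha
  set c : ℝ := ρ * (1 - γ₁) with hc
  have ha0 : 0 < a := mul_pos hρ (by linarith)
  have hc0 : 0 < c := mul_pos hρ (by linarith)
  have hr2 : (1:ℝ) < 1 + ρ / κ₂ := by
    have := div_pos hρ hκ₂; linarith
  have hr1 : (1:ℝ) < 1 + ρ / κ₁ := by
    have := div_pos hρ hκ₁; linarith
  have hT₂0 : 0 ≤ T₂ := by
    rw [hT₂]
    exact mul_nonneg (one_div_nonneg.2 ha0.le) (Real.log_nonneg hr2.le)
  have hT₁0 : 0 ≤ T₁ := by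
    rw [hT₁]
    exact mul_nonneg (one_div_nonneg.2 hc0.le) (Real.log_nonneg hr1.le)
  have haT₂ : a * T₂ = Real.log (1 + ρ / κ₂) := by
    rw [hT₂]; field_simp
  have hcT₁ : c * T₁ = Real.log (1 + ρ / κ₁) := by
    rw [hT₁]; field_simp
  have hexp2 : Real.exp (a * T₂) = 1 + ρ / κ₂ := by
    rw [haT₂, Real.exp_log (by linarith)]
  have hexp1 : Real.exp (c * T₁) = 1 + ρ / κ₁ := by
    rw [hcT₁, Real.exp_log (by linarith)]
  have hcont : ContinuousOn x (Set.Icc 0 (T₂ + T₁)) := fun t ht =>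
    (hode t ht).continuousAt.continuousWithinAt
  -- Phase 2: on [0, T₂], show x T₂ ≤ 1.
  set φ : ℝ → ℝ := fun t => Real.exp (-a * t) * (x t ^ (1 - γ₂) + κ₂ / ρ) with hφ
  have hsub2 : Set.Icc (0:ℝ) T₂ ⊆ Set.Icc 0 (T₂ + T₁) := Set.Icc_subset_Icc le_rfl (by linarith)
  have hφderiv : ∀ t ∈ Set.Icc 0 (T₂ + T₁),
      HasDerivAt φ (Real.exp (-a * t) * (-a) * (x t ^ (1 - γ₂) + κ₂ / ρ)
        + Real.exp (-a * t) * ((-(ρ * x t + κ₁ * x t ^ γ₁ + κ₂ * x t ^ γ₂)) * (1 - γ₂)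
            * x t ^ (1 - γ₂ - 1))) t := by
    intro t ht
    have hE : HasDerivAt (fun s : ℝ => Real.exp (-a * s)) (Real.exp (-a * t) * (-a)) t := by
      have : HasDerivAt (fun s : ℝ => -a * s) (-a) t := by
        simpa using (hasDerivAt_id t).const_mul (-a)
      exact this.exp
    have hW : HasDerivAt (fun s => x s ^ (1 - γ₂) + κ₂ / ρ)
        ((-(ρ * x t + κ₁ * x t ^ γ₁ + κ₂ * x t ^ γ₂)) * (1 - γ₂) * x t ^ (1 - γ₂ - 1)) t :=
      ((hode t ht).rpow_const (Or.inl (hpos t ht).ne')).add_const _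
    exact hE.mul hW
  have hφnonneg : ∀ t ∈ Set.Icc 0 (T₂ + T₁),
      0 ≤ Real.exp (-a * t) * (-a) * (x t ^ (1 - γ₂) + κ₂ / ρ)
        + Real.exp (-a * t) * ((-(ρ * x t + κ₁ * x t ^ γ₁ + κ₂ * x t ^ γ₂)) * (1 - γ₂)
            * x t ^ (1 - γ₂ - 1)) := by
    intro t ht
    have hx := hpos t ht
    have e1 : x t * x t ^ (-γ₂) = x t ^ (1 - γ₂) := by
      rw [sub_eq_add_neg, Real.rpow_add hx, Real.rpow_one]
    have e2 : x t ^ γ₁ * x t ^ (-γ₂) = x t ^ (γ₁ - γ₂) := by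
      rw [sub_eq_add_neg, Real.rpow_add hx]
    have e3 : x t ^ γ₂ * x t ^ (-γ₂) = 1 := by
      rw [← Real.rpow_add hx, add_neg_cancel, Real.rpow_zero]
    have hpow : x t ^ (1 - γ₂ - 1) = x t ^ (-γ₂) := by norm_num
    rw [hpow]
    have hkey : (-a) * (x t ^ (1 - γ₂) + κ₂ / ρ)
        + (-(ρ * x t + κ₁ * x t ^ γ₁ + κ₂ * x t ^ γ₂)) * (1 - γ₂) * x t ^ (-γ₂)
        = (γ₂ - 1) * κ₁ * x t ^ (γ₁ - γ₂) := by
      have hk : ρ * (κ₂ / ρ) = κ₂ := mul_div_cancel₀ _ hρ.ne'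
      rw [ha]
      linear_combination (γ₂ - 1) * ρ * e1 + (γ₂ - 1) * κ₁ * e2 + (γ₂ - 1) * κ₂ * e3
        - (γ₂ - 1) * hk
    have : Real.exp (-a * t) * (-a) * (x t ^ (1 - γ₂) + κ₂ / ρ)
        + Real.exp (-a * t) * ((-(ρ * x t + κ₁ * x t ^ γ₁ + κ₂ * x t ^ γ₂)) * (1 - γ₂)
            * x t ^ (-γ₂))
        = Real.exp (-a * t) * ((γ₂ - 1) * κ₁ * x t ^ (γ₁ - γ₂)) := by
      rw [← hkey]; ring
    rw [this]
    exact mul_nonneg (Real.exp_pos _).le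
      (mul_nonneg (mul_nonneg (by linarith) hκ₁.le) (Real.rpow_pos_of_pos hx _).le)
  have hφmono : MonotoneOn φ (Set.Icc 0 T₂) := by
    apply monotoneOn_of_deriv_nonneg (convex_Icc _ _)
    · exact fun t ht => (hφderiv t (hsub2 ht)).continuousAt.continuousWithinAt
    · intro t ht
      rw [interior_Icc] at ht
      exact ((hφderiv t (hsub2 (Set.Ioo_subset_Icc_self ht))).differentiableAt).differentiableWithinAt
    · intro t ht
      rw [interior_Icc] at ht
      have ht' := hsub2 (Set.Ioo_subset_Icc_self ht)
      rw [(hφderiv t ht').deriv]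
      exact hφnonneg t ht'
  have hφ0T₂ := hφmono (Set.left_mem_Icc.2 hT₂0) (Set.right_mem_Icc.2 hT₂0) hT₂0
  -- deduce x T₂ ≤ 1
  have hxT₂mem : T₂ ∈ Set.Icc 0 (T₂ + T₁) := ⟨hT₂0, by linarith⟩
  have hw0 : 0 < x 0 ^ (1 - γ₂) := Real.rpow_pos_of_pos (hpos 0 ⟨le_rfl, by linarith⟩) _
  have hwT₂ : 1 ≤ x T₂ ^ (1 - γ₂) := by
    have hφ0 : φ 0 = x 0 ^ (1 - γ₂) + κ₂ / ρ := by
      simp [hφ]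
    have hφT₂ : φ T₂ = Real.exp (-a * T₂) * (x T₂ ^ (1 - γ₂) + κ₂ / ρ) := rfl
    rw [hφ0, hφT₂] at hφ0T₂
    have hEmul : Real.exp (-a * T₂) * (1 + ρ / κ₂) = 1 := by
      rw [neg_mul, Real.exp_neg, hexp2]
      exact inv_mul_cancel₀ (by linarith)
    have hEpos : 0 < Real.exp (-a * T₂) := Real.exp_pos _
    -- multiply hφ0T₂ by (1 + ρ/κ₂)
    have h2 : (1 + ρ / κ₂) * (x 0 ^ (1 - γ₂) + κ₂ / ρ) ≤ x T₂ ^ (1 - γ₂) + κ₂ / ρ := by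
      calc (1 + ρ / κ₂) * (x 0 ^ (1 - γ₂) + κ₂ / ρ)
          ≤ (1 + ρ / κ₂) * (Real.exp (-a * T₂) * (x T₂ ^ (1 - γ₂) + κ₂ / ρ)) := by
            apply mul_le_mul_of_nonneg_left hφ0T₂ (by linarith)
        _ = x T₂ ^ (1 - γ₂) + κ₂ / ρ := by
            rw [← mul_assoc, mul_comm (1 + ρ / κ₂), hEmul, one_mul]
    have hk1 : ρ / κ₂ * (κ₂ / ρ) = 1 := by field_simp
    nlinarith [div_pos hρ hκ₂, div_pos hκ₂ hρ, mul_pos (div_pos hρ hκ₂) hw0]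
  have hxT₂le : x T₂ ≤ 1 := by
    by_contra h
    push_neg at h
    have := Real.rpow_lt_one_of_one_lt_of_neg h (by linarith : 1 - γ₂ < 0)
    linarith
  -- Phase 1: on [T₂, T₂ + T₁]
  set ψ : ℝ → ℝ := fun t => Real.exp (c * t) * (x t ^ (1 - γ₁) + κ₁ / ρ) with hψ
  have hψderiv : ∀ t ∈ Set.Icc 0 (T₂ + T₁),
      HasDerivAt ψ (Real.exp (c * t) * c * (x t ^ (1 - γ₁) + κ₁ / ρ)
        + Real.exp (c * t) * ((-(ρ * x t + κ₁ * x t ^ γ₁ + κ₂ * x t ^ γ₂)) * (1 - γ₁)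
            * x t ^ (1 - γ₁ - 1))) t := by
    intro t ht
    have hE : HasDerivAt (fun s : ℝ => Real.exp (c * s)) (Real.exp (c * t) * c) t := by
      have : HasDerivAt (fun s : ℝ => c * s) c t := by
        simpa using (hasDerivAt_id t).const_mul c
      exact this.exp
    have hW : HasDerivAt (fun s => x s ^ (1 - γ₁) + κ₁ / ρ)
        ((-(ρ * x t + κ₁ * x t ^ γ₁ + κ₂ * x t ^ γ₂)) * (1 - γ₁) * x t ^ (1 - γ₁ - 1)) t :=
      ((hode t ht).rpow_const (Or.inl (hpos t ht).ne')).add_const _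
    exact hE.mul hW
  have hψnonpos : ∀ t ∈ Set.Icc 0 (T₂ + T₁),
      Real.exp (c * t) * c * (x t ^ (1 - γ₁) + κ₁ / ρ)
        + Real.exp (c * t) * ((-(ρ * x t + κ₁ * x t ^ γ₁ + κ₂ * x t ^ γ₂)) * (1 - γ₁)
            * x t ^ (1 - γ₁ - 1)) ≤ 0 := by
    intro t ht
    have hx := hpos t ht
    have e1 : x t * x t ^ (-γ₁) = x t ^ (1 - γ₁) := by
      rw [sub_eq_add_neg, Real.rpow_add hx, Real.rpow_one]
    have e2 : x t ^ γ₂ * x t ^ (-γ₁) = x t ^ (γ₂ - γ₁) := by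
      rw [sub_eq_add_neg, Real.rpow_add hx]
    have e3 : x t ^ γ₁ * x t ^ (-γ₁) = 1 := by
      rw [← Real.rpow_add hx, add_neg_cancel, Real.rpow_zero]
    have hpow : x t ^ (1 - γ₁ - 1) = x t ^ (-γ₁) := by norm_num
    rw [hpow]
    have hkey : c * (x t ^ (1 - γ₁) + κ₁ / ρ)
        + (-(ρ * x t + κ₁ * x t ^ γ₁ + κ₂ * x t ^ γ₂)) * (1 - γ₁) * x t ^ (-γ₁)
        = -((1 - γ₁) * κ₂ * x t ^ (γ₂ - γ₁)) := by
      have hk : ρ * (κ₁ / ρ) = κ₁ := mul_div_cancel₀ _ hρ.ne'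
      rw [hc]
      linear_combination (-(1 - γ₁) * ρ) * e1 - (1 - γ₁) * κ₂ * e2 - (1 - γ₁) * κ₁ * e3
        + (1 - γ₁) * hk
    have heq : Real.exp (c * t) * c * (x t ^ (1 - γ₁) + κ₁ / ρ)
        + Real.exp (c * t) * ((-(ρ * x t + κ₁ * x t ^ γ₁ + κ₂ * x t ^ γ₂)) * (1 - γ₁)
            * x t ^ (-γ₁))
        = Real.exp (c * t) * (-((1 - γ₁) * κ₂ * x t ^ (γ₂ - γ₁))) := by
      rw [← hkey]; ring
    rw [heq, mul_neg]
    have h1 : 0 < x t ^ (γ₂ - γ₁) := Real.rpow_pos_of_pos hx _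
    have h2 : 0 < Real.exp (c * t) := Real.exp_pos _
    exact neg_nonpos.2 (mul_nonneg h2.le
      (mul_nonneg (mul_nonneg (by linarith) hκ₂.le) h1.le))
  have hsub1 : Set.Icc T₂ (T₂ + T₁) ⊆ Set.Icc 0 (T₂ + T₁) := Set.Icc_subset_Icc hT₂0 le_rfl
  have hψmono : AntitoneOn ψ (Set.Icc T₂ (T₂ + T₁)) := by
    apply antitoneOn_of_deriv_nonpos (convex_Icc _ _)
    · exact fun t ht => (hψderiv t (hsub1 ht)).continuousAt.continuousWithinAt
    · intro t ht
      rw [interior_Icc] at ht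
      exact ((hψderiv t (hsub1 (Set.Ioo_subset_Icc_self ht))).differentiableAt).differentiableWithinAt
    · intro t ht
      rw [interior_Icc] at ht
      have ht' := hsub1 (Set.Ioo_subset_Icc_self ht)
      rw [(hψderiv t ht').deriv]
      exact hψnonpos t ht'
  have hψle := hψmono (Set.left_mem_Icc.2 (by linarith)) (Set.right_mem_Icc.2 (by linarith))
    (by linarith)
  -- final contradiction
  have huT : 0 < x (T₂ + T₁) ^ (1 - γ₁) :=
    Real.rpow_pos_of_pos (hpos _ ⟨by linarith, le_rfl⟩) _
  have huT₂ : x T₂ ^ (1 - γ₁) ≤ 1 :=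
    Real.rpow_le_one (hpos _ hxT₂mem).le hxT₂le (by linarith)
  have hψT₂ : ψ T₂ = Real.exp (c * T₂) * (x T₂ ^ (1 - γ₁) + κ₁ / ρ) := rfl
  have hψT : ψ (T₂ + T₁) = Real.exp (c * (T₂ + T₁)) * (x (T₂ + T₁) ^ (1 - γ₁) + κ₁ / ρ) := rfl
  rw [hψT, hψT₂] at hψle
  have hsplit : Real.exp (c * (T₂ + T₁)) = Real.exp (c * T₂) * (1 + ρ / κ₁) := by
    rw [mul_add, Real.exp_add, hexp1]
  rw [hsplit] at hψle
  have hE2 : 0 < Real.exp (c * T₂) := Real.exp_pos _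
  have h3 : (1 + ρ / κ₁) * (x (T₂ + T₁) ^ (1 - γ₁) + κ₁ / ρ) ≤ x T₂ ^ (1 - γ₁) + κ₁ / ρ := by
    have := (mul_le_mul_iff_right₀ hE2).1 (by linarith [hψle] : Real.exp (c * T₂) *
      ((1 + ρ / κ₁) * (x (T₂ + T₁) ^ (1 - γ₁) + κ₁ / ρ)) ≤ Real.exp (c * T₂) *
        (x T₂ ^ (1 - γ₁) + κ₁ / ρ))
    exact this
  have hk1 : ρ / κ₁ * (κ₁ / ρ) = 1 := by field_simp
  nlinarith [div_pos hρ hκ₁, div_pos hκ₁ hρ, mul_pos (div_pos hρ hκ₁) huT]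

theorem stmt_6 (ρ κ₁ κ₂ γ₁ γ₂ : ℝ)
    (hρ : 0 < ρ) (hκ₁ : 0 < κ₁) (hκ₂ : 0 < κ₂)
    (hγ₁0 : 0 < γ₁) (hγ₁1 : γ₁ < 1) (hγ₂ : 1 < γ₂)
    (x : ℝ → ℝ) (x₀ : ℝ) (hx0 : x 0 = x₀)
    (hode : ∀ t, 0 ≤ t →
      HasDerivAt x (-ρ * x t - κ₁ * spow (x t) γ₁ - κ₂ * spow (x t) γ₂) t) :
    (∃ t, 0 ≤ t ∧ x t = 0) ∧
    sInf {t : ℝ | 0 ≤ t ∧ x t = 0} ≤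
      1 / (ρ * (γ₂ - 1)) * Real.log (1 + ρ / κ₂) +
      1 / (ρ * (1 - γ₁)) * Real.log (1 + ρ / κ₁) := by
  set T₂ : ℝ := 1 / (ρ * (γ₂ - 1)) * Real.log (1 + ρ / κ₂) with hT₂
  set T₁ : ℝ := 1 / (ρ * (1 - γ₁)) * Real.log (1 + ρ / κ₁) with hT₁
  set T : ℝ := T₂ + T₁ with hT
  have hzero : ∃ t ∈ Set.Icc (0:ℝ) T, x t = 0 := by
    by_contra hne
    push_neg at hne
    have hx0ne : x 0 ≠ 0 := by
      have hr2 : (1:ℝ) ≤ 1 + ρ / κ₂ := by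
        have := div_pos hρ hκ₂; linarith
      have hr1 : (1:ℝ) ≤ 1 + ρ / κ₁ := by
        have := div_pos hρ hκ₁; linarith
      have ha0 : (0:ℝ) < ρ * (γ₂ - 1) := mul_pos hρ (by linarith)
      have hc0 : (0:ℝ) < ρ * (1 - γ₁) := mul_pos hρ (by linarith)
      have hT₂0 : 0 ≤ T₂ := mul_nonneg (one_div_nonneg.2 ha0.le) (Real.log_nonneg hr2)
      have hT₁0 : 0 ≤ T₁ := mul_nonneg (one_div_nonneg.2 hc0.le) (Real.log_nonneg hr1)
      exact hne 0 ⟨le_rfl, by simp [hT]; linarith⟩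
    have hcont : ContinuousOn x (Set.Icc 0 T) := fun t ht =>
      (hode t ht.1).continuousAt.continuousWithinAt
    rcases hx0ne.lt_or_gt with hneg | hposx
    · -- x 0 < 0 : use y = -x
      have hposy : ∀ t ∈ Set.Icc (0:ℝ) T, 0 < -x t := by
        intro t ht
        rcases lt_trichotomy (x t) 0 with h | h | h
        · linarith
        · exact absurd h (hne t ht)
        · exfalso
          have hsub : Set.Icc (0:ℝ) t ⊆ Set.Icc 0 T := Set.Icc_subset_Icc le_rfl ht.2
          have : (0:ℝ) ∈ Set.Icc (x 0) (x t) := ⟨hneg.le, h.le⟩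
          rcases intermediate_value_Icc ht.1 (hcont.mono hsub) this with ⟨s, hs, hxs⟩
          exact hne s (hsub hs) hxs
      apply no_escape ρ κ₁ κ₂ γ₁ γ₂ hρ hκ₁ hκ₂ hγ₁0 hγ₁1 hγ₂ (fun t => -x t) T₂ T₁ hT₂ hT₁
      · intro t ht
        have hy := hposy t ht
        have h1 : (-x t) ^ γ₁ = -spow (x t) γ₁ := by
          rw [← spow_neg, spow_of_pos hy]
        have h2 : (-x t) ^ γ₂ = -spow (x t) γ₂ := by
          rw [← spow_neg, spow_of_pos hy]
        have : HasDerivAt (fun t => -x t) _ t := (hode t ht.1).neg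
        convert this using 1
        rw [h1, h2]; ring
      · exact hposy
    · -- x 0 > 0
      have hposx' : ∀ t ∈ Set.Icc (0:ℝ) T, 0 < x t := by
        intro t ht
        rcases lt_trichotomy (x t) 0 with h | h | h
        · exfalso
          have hsub : Set.Icc (0:ℝ) t ⊆ Set.Icc 0 T := Set.Icc_subset_Icc le_rfl ht.2
          have : (0:ℝ) ∈ Set.Icc (x t) (x 0) := ⟨h.le, hposx.le⟩
          rcases intermediate_value_Icc' ht.1 (hcont.mono hsub) this with ⟨s, hs, hxs⟩
          exact hne s (hsub hs) hxs
        · exact absurd h (hne t ht)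
        · exact h
      apply no_escape ρ κ₁ κ₂ γ₁ γ₂ hρ hκ₁ hκ₂ hγ₁0 hγ₁1 hγ₂ x T₂ T₁ hT₂ hT₁
      · intro t ht
        have hy := hposx' t ht
        have := hode t ht.1
        convert this using 1
        rw [spow_of_pos hy, spow_of_pos hy]; ring
      · exact hposx'
  rcases hzero with ⟨t₀, ht₀, hxt₀⟩
  constructor
  · exact ⟨t₀, ht₀.1, hxt₀⟩
  · have hbdd : BddBelow {t : ℝ | 0 ≤ t ∧ x t = 0} := ⟨0, fun y hy => hy.1⟩
    have hmem : t₀ ∈ {t : ℝ | 0 ≤ t ∧ x t = 0} := ⟨ht₀.1, hxt₀⟩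
    exact le_trans (csInf_le hbdd hmem) ht₀.2
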